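/- Let 1 < β < (1+√5)/2 or suppose d_{−β}(1) is periodic with odd period. Then there exists a subshift factor of (Σ_{−β}, σ) that is not intrinsically ergodic; specifically, there is a continuous surjection π : Σ_{−β} → X with π∘σ = σ∘π, where X = {1^∞} ∪ {1^n 2^∞ : n ≥ 1} ∪ {2^∞}. -/

import Mathlib

noncomputable def Tneg (β : ℝ) : ℝ → ℝ := fun y => -β * y + ⌊β * y⌋ + 1

noncomputable def dExp (β : ℝ) (x : ℝ) : ℕ → ℕ :=
  fun i => (⌊β * ((Tneg β)^[i] x)⌋).toNat + 1

lemma Tneg_mem (β y : ℝ) : Tneg β y ∈ Set.Ioc (0 : ℝ) 1 := by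
  have h1 := Int.lt_floor_add_one (β * y)
  have h2 := Int.floor_le (β * y)
  constructor <;> simp only [Tneg] <;> linarith

lemma iter_mem (β : ℝ) {t : ℝ} (ht : t ∈ Set.Ioc (0 : ℝ) 1) (k : ℕ) :
    (Tneg β)^[k] t ∈ Set.Ioc (0 : ℝ) 1 := by
  cases k with
  | zero => exact ht
  | succ k => rw [Function.iterate_succ_apply']; exact Tneg_mem β _

lemma dExp_shift (β t : ℝ) (p i : ℕ) : dExp β ((Tneg β)^[p] t) i = dExp β t (p + i) := by
  simp only [dExp, ← Function.iterate_add_apply]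
  rw [Nat.add_comm i p]

lemma floor_eq_of_digit_eq (β : ℝ) (hβ : 0 < β) {a b : ℝ} (ha : 0 < a) (hb : 0 < b)
    (h : dExp β a 0 = dExp β b 0) : ⌊β * a⌋ = ⌊β * b⌋ := by
  have h1 : (0 : ℤ) ≤ ⌊β * a⌋ := Int.floor_nonneg.2 (by positivity)
  have h2 : (0 : ℤ) ≤ ⌊β * b⌋ := Int.floor_nonneg.2 (by positivity)
  unfold dExp at h
  simp only [Function.iterate_zero, id_eq] at h
  omega

lemma iter_sub (β : ℝ) (hβ : 0 < β) {a b : ℝ} (ha : a ∈ Set.Ioc (0 : ℝ) 1)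
    (hb : b ∈ Set.Ioc (0 : ℝ) 1) (n : ℕ) (hd : ∀ i, i < n → dExp β a i = dExp β b i) :
    (Tneg β)^[n] a - (Tneg β)^[n] b = (-β) ^ n * (a - b) := by
  induction n with
  | zero => simp
  | succ n ih =>
    have h1 : dExp β ((Tneg β)^[n] a) 0 = dExp β ((Tneg β)^[n] b) 0 := by
      rw [dExp_shift, dExp_shift]
      exact hd n (Nat.lt_succ_self n)
    have hfl := floor_eq_of_digit_eq β hβ (iter_mem β ha n).1 (iter_mem β hb n).1 h1
    have ih' := ih (fun i hi => hd i (by omega))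
    have hT : Tneg β ((Tneg β)^[n] a) - Tneg β ((Tneg β)^[n] b)
        = -β * ((Tneg β)^[n] a - (Tneg β)^[n] b) := by
      simp only [Tneg]; rw [hfl]; ring
    rw [Function.iterate_succ_apply', Function.iterate_succ_apply', hT, ih', pow_succ]
    ring

lemma eq_of_dExp_eq (β : ℝ) (hβ : 1 < β) {a b : ℝ} (ha : a ∈ Set.Ioc (0 : ℝ) 1)
    (hb : b ∈ Set.Ioc (0 : ℝ) 1) (h : ∀ i, dExp β a i = dExp β b i) : a = b := by
  by_contra hne
  have hab : 0 < |a - b| := abs_pos.2 (sub_ne_zero.2 hne)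
  obtain ⟨N, hN⟩ := pow_unbounded_of_one_lt (1 / |a - b|) hβ
  have h1 : β ^ N * |a - b| ≤ 1 := by
    have hs := iter_sub β (by linarith) ha hb N (fun i _ => h i)
    have hA := iter_mem β ha N
    have hB := iter_mem β hb N
    have : |(Tneg β)^[N] a - (Tneg β)^[N] b| ≤ 1 := by
      rw [abs_le]
      constructor <;> [linarith [hA.1, hB.2]; linarith [hA.2, hB.1]]
    calc β ^ N * |a - b| = |(-β) ^ N * (a - b)| := by
          rw [abs_mul, abs_pow, abs_neg, abs_of_pos (by linarith : (0:ℝ) < β)]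
      _ = |(Tneg β)^[N] a - (Tneg β)^[N] b| := by rw [hs]
      _ ≤ 1 := this
  rw [div_lt_iff₀ hab] at hN
  nlinarith

lemma pullback (β : ℝ) (hβ : 1 < β) {y : ℝ} (hy : y ∈ Set.Ioo (0 : ℝ) 1) :
    (1 - y) / β ∈ Set.Ioo (0 : ℝ) 1 ∧ dExp β ((1 - y) / β) 0 = 1 ∧
      ∀ i, dExp β ((1 - y) / β) (i + 1) = dExp β y i := by
  obtain ⟨hy0, hy1⟩ := hy
  have hb0 : (0 : ℝ) < β := by linarith
  have hmul : β * ((1 - y) / β) = 1 - y := by field_simp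
  have hfl : ⌊β * ((1 - y) / β)⌋ = 0 := by
    rw [hmul]; exact Int.floor_eq_zero_iff.2 ⟨by linarith, by linarith⟩
  have hT : Tneg β ((1 - y) / β) = y := by
    simp only [Tneg, hfl]
    have : -β * ((1 - y) / β) = -(1 - y) := by field_simp
    rw [this]; push_cast; ring
  refine ⟨⟨div_pos (by linarith) hb0, ?_⟩, ?_, ?_⟩
  · rw [div_lt_one hb0]; linarith
  · unfold dExp; simp [hfl]
  · intro i
    have : dExp β ((1 - y) / β) (1 + i) = dExp β ((Tneg β)^[1] ((1 - y) / β)) i :=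
      (dExp_shift β _ 1 i).symm
    rw [Nat.add_comm i 1, this]
    simp [hT]

lemma prefix_ones (β : ℝ) (hβ : 1 < β) (k : ℕ) {y : ℝ} (hy : y ∈ Set.Ioo (0 : ℝ) 1) :
    ∃ c ∈ Set.Ioo (0 : ℝ) 1, (∀ i, i < k → dExp β c i = 1) ∧
      ∀ i, dExp β c (k + i) = dExp β y i := by
  induction k with
  | zero => exact ⟨y, hy, fun i hi => absurd hi (Nat.not_lt_zero i), fun i => by simp⟩
  | succ k ih =>
    obtain ⟨c, hc, h1, h2⟩ := ih
    obtain ⟨hc', hd0, hds⟩ := pullback β hβ hc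
    refine ⟨(1 - c) / β, hc', ?_, ?_⟩
    · intro i hi
      cases i with
      | zero => exact hd0
      | succ i => rw [hds i, h1 i (by omega)]
    · intro i
      rw [show k + 1 + i = (k + i) + 1 by omega, hds (k + i), h2 i]

lemma one_mem_Ioc : (1 : ℝ) ∈ Set.Ioc (0 : ℝ) 1 := ⟨one_pos, le_refl 1⟩

lemma eq_one_of_prefix (β : ℝ) (hβ : 1 < β) (n : ℕ) (hn : 0 < n) (hodd : Odd n)
    (hper : ∀ i, dExp β 1 (i + n) = dExp β 1 i) {s : ℝ} (hs : s ∈ Set.Ioc (0 : ℝ) 1)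
    (hd : ∀ i, i < n → dExp β s i = dExp β 1 i) : s = 1 := by
  have hTn1 : (Tneg β)^[n] (1 : ℝ) = 1 := by
    apply eq_of_dExp_eq β hβ (iter_mem β one_mem_Ioc n) one_mem_Ioc
    intro i
    rw [dExp_shift, Nat.add_comm n i]
    exact hper i
  have hsub := iter_sub β (by linarith) hs one_mem_Ioc n hd
  rw [hTn1] at hsub
  have hneg : (-β) ^ n = -(β ^ n) := Odd.neg_pow hodd β
  have hle : (Tneg β)^[n] s ≤ 1 := (iter_mem β hs n).2
  have hpow : (0 : ℝ) < β ^ n := pow_pos (by linarith) n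
  have h1s : β ^ n * (1 - s) ≤ 0 := by nlinarith [hsub]
  have : 1 ≤ s := by nlinarith
  linarith [hs.2]

def OccAt (w : ℕ → ℕ) (n : ℕ) (x : ℕ → ℕ) (p : ℕ) : Prop := ∀ i, i < n → x (p + i) = w i

lemma occSet_clopen (w : ℕ → ℕ) (n : ℕ) (p : ℕ) :
    IsClopen {x : ℕ → ℕ | OccAt w n x p} := by
  have he : {x : ℕ → ℕ | OccAt w n x p} =
      ⋂ i ∈ Finset.range n, {x : ℕ → ℕ | x (p + i) = w i} := by
    ext x; simp [OccAt]
  rw [he]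
  exact isClopen_biInter_finset fun i _ =>
    (isClopen_discrete {w i}).preimage (continuous_apply (p + i))

lemma window_lemma (n : ℕ) (hn : 0 < n) (q0 i : ℕ) (h : q0 ≤ i + (n - 1)) :
    ∃ j k, j < n ∧ i + j = q0 + k * n := by
  by_cases hi : i ≤ q0
  · exact ⟨q0 - i, 0, by omega, by omega⟩
  · set d := i - q0 with hd
    have hdm := Nat.div_add_mod (d + n - 1) n
    have hr : (d + n - 1) % n < n := Nat.mod_lt _ hn
    set K := n * ((d + n - 1) / n) with hK
    refine ⟨q0 + K - i, (d + n - 1) / n, by omega, by rw [Nat.mul_comm] at hK; omega⟩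

/-- The (−β)-shift: the closure of the set of (−β)-expansions of points of `(0,1]`. -/
noncomputable def SigmaNegBeta (β : ℝ) : Set (ℕ → ℕ) :=
  closure {y | ∃ x ∈ Set.Ioc (0 : ℝ) 1, y = dExp β x}

def shift (x : ℕ → ℕ) : ℕ → ℕ := fun n => x (n + 1)

/-- The non-intrinsically ergodic subshift `X = {1^∞} ∪ {1^n 2^∞ : n ≥ 1} ∪ {2^∞}`. -/
def Xset : Set (ℕ → ℕ) :=
  {x | x = (fun _ => 1) ∨ x = (fun _ => 2) ∨
    ∃ n : ℕ, 1 ≤ n ∧ x = fun i => if i < n then 1 else 2}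

lemma master (β : ℝ) (hβ : 1 < β) (n W : ℕ) (w : ℕ → ℕ) (hn : 0 < n) (hW : 0 < W)
    (hw0 : w 0 ≠ 1)
    (habs : ∀ t ∈ Set.Ioc (0 : ℝ) 1, ∀ p, OccAt w n (dExp β t) p →
      ∃ j, 1 ≤ j ∧ j ≤ W ∧ OccAt w n (dExp β t) (p + j))
    (hfull : ∃ b ∈ Set.Ioc (0 : ℝ) 1, ∀ i, ∃ j, j < W ∧ OccAt w n (dExp β b) (i + j))
    (hpart : ∀ m, 1 ≤ m → ∃ c ∈ Set.Ioc (0 : ℝ) 1,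
      (∀ i, i < m → ¬ ∃ j, j < W ∧ OccAt w n (dExp β c) (i + j)) ∧
      (∀ i, m ≤ i → ∃ j, j < W ∧ OccAt w n (dExp β c) (i + j))) :
    ∃ π : (ℕ → ℕ) → (ℕ → ℕ),
      ContinuousOn π (SigmaNegBeta β) ∧
      π '' SigmaNegBeta β = Xset ∧
      ∀ x ∈ SigmaNegBeta β, π (shift x) = shift (π x) := by
  classical
  set P : (ℕ → ℕ) → ℕ → Prop := fun x i => ∃ j, j < W ∧ OccAt w n x (i + j) with hPdef
  refine ⟨fun x i => if P x i then 2 else 1, ?_, ?_, ?_⟩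
  · -- continuity
    apply Continuous.continuousOn
    apply continuous_pi
    intro i
    have hclo : IsClopen {x : ℕ → ℕ | P x i} := by
      have he : {x : ℕ → ℕ | P x i} = ⋃ j ∈ Finset.range W, {x | OccAt w n x (i + j)} := by
        ext x; simp [hPdef]
      rw [he]
      exact isClopen_biUnion_finset fun j _ => occSet_clopen w n (i + j)
    apply IsLocallyConstant.continuous
    intro s
    by_cases h2 : (2 : ℕ) ∈ s <;> by_cases h1 : (1 : ℕ) ∈ s
    · have : (fun x : ℕ → ℕ => if P x i then (2:ℕ) else 1) ⁻¹' s = Set.univ := by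
        ext x; by_cases hp : P x i <;> simp [hp, h1, h2]
      rw [this]; exact isOpen_univ
    · have : (fun x : ℕ → ℕ => if P x i then (2:ℕ) else 1) ⁻¹' s = {x | P x i} := by
        ext x; by_cases hp : P x i <;> simp [hp, h1, h2]
      rw [this]; exact hclo.isOpen
    · have : (fun x : ℕ → ℕ => if P x i then (2:ℕ) else 1) ⁻¹' s = {x | P x i}ᶜ := by
        ext x; by_cases hp : P x i <;> simp [hp, h1, h2]
      rw [this]; exact hclo.compl.isOpen
    · have : (fun x : ℕ → ℕ => if P x i then (2:ℕ) else 1) ⁻¹' s = ∅ := by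
        ext x; by_cases hp : P x i <;> simp [hp, h1, h2]
      rw [this]; exact isOpen_empty
  · -- image
    apply Set.Subset.antisymm
    · rintro _ ⟨x, hx, rfl⟩
      have hmono : ∀ i, P x i → P x (i + 1) := by
        rintro i ⟨j, hjW, hocc⟩
        rcases Nat.eq_zero_or_pos j with rfl | hj
        · have hxQ : x ∈ {z : ℕ → ℕ | OccAt w n z i →
              ∃ j, 1 ≤ j ∧ j ≤ W ∧ OccAt w n z (i + j)} := by
            refine closure_minimal ?_ ?_ hx
            · rintro _ ⟨t, ht, rfl⟩; exact habs t ht i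
            · rw [← isOpen_compl_iff]
              have he : {z : ℕ → ℕ | OccAt w n z i →
                  ∃ j, 1 ≤ j ∧ j ≤ W ∧ OccAt w n z (i + j)}ᶜ =
                  {z : ℕ → ℕ | OccAt w n z i} ∩
                    ⋂ j ∈ Finset.Icc 1 W, {z : ℕ → ℕ | OccAt w n z (i + j)}ᶜ := by
                ext z
                simp only [Set.mem_compl_iff, Set.mem_setOf_eq, Set.mem_inter_iff,
                  Set.mem_iInter, Finset.mem_Icc]
                push_neg
                constructor
                · rintro ⟨hz, hz'⟩
                  exact ⟨hz, fun j hj => hz' j hj.1 hj.2⟩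
                · rintro ⟨hz, hz'⟩
                  exact ⟨hz, fun j hj1 hjW => hz' j ⟨hj1, hjW⟩⟩
              rw [he]
              exact ((occSet_clopen w n i).isOpen).inter
                (isOpen_biInter_finset fun j _ => (occSet_clopen w n (i + j)).isClosed.isOpen_compl)
          rw [Nat.add_zero] at hocc
          obtain ⟨k, hk1, hkW, hocck⟩ := hxQ hocc
          exact ⟨k - 1, by omega, by rw [show i + 1 + (k - 1) = i + k by omega]; exact hocck⟩
        · exact ⟨j - 1, by omega, by rw [show i + 1 + (j - 1) = i + j by omega]; exact hocc⟩
      by_cases hex : ∃ i, P x i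
      · have hup : ∀ i, Nat.find hex ≤ i → P x i := by
          intro i hi
          induction i, hi using Nat.le_induction with
          | base => exact Nat.find_spec hex
          | succ k _ ih => exact hmono k ih
        rcases Nat.eq_zero_or_pos (Nat.find hex) with hm0 | hm1
        · right; left
          funext i
          show (if P x i then (2:ℕ) else 1) = 2
          rw [if_pos (hup i (by omega))]
        · right; right
          refine ⟨Nat.find hex, hm1, funext fun i => ?_⟩
          show (if P x i then (2:ℕ) else 1) = if i < Nat.find hex then 1 else 2
          by_cases hi : i < Nat.find hex
          · rw [if_neg (Nat.find_min hex hi), if_pos hi]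
          · rw [if_pos (hup i (le_of_not_gt hi)), if_neg hi]
      · left
        funext i
        show (if P x i then (2:ℕ) else 1) = 1
        rw [if_neg (fun hp => hex ⟨i, hp⟩)]
    · rintro y (h1 | h2 | ⟨m, hm, rfl⟩)
      · -- 1^∞
        have hb0 : (0 : ℝ) < 1 + β := by linarith
        have ha : (1 / (1 + β)) ∈ Set.Ioc (0 : ℝ) 1 :=
          ⟨by positivity, by rw [div_le_one hb0]; linarith⟩
        have hflr : ⌊β * (1 / (1 + β))⌋ = 0 := by
          apply Int.floor_eq_zero_iff.2
          constructor
          · positivity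
          · rw [mul_one_div, div_lt_one hb0]; linarith
        have hfx : Tneg β (1 / (1 + β)) = 1 / (1 + β) := by
          simp only [Tneg, hflr]
          push_cast
          field_simp
          try ring
        have hd : ∀ i, dExp β (1 / (1 + β)) i = 1 := by
          intro i
          unfold dExp
          rw [Function.iterate_fixed hfx i, hflr]
          rfl
        refine ⟨dExp β (1 / (1 + β)), subset_closure ⟨_, ha, rfl⟩, ?_⟩
        rw [h1]
        funext i
        show (if P (dExp β (1 / (1 + β))) i then (2:ℕ) else 1) = 1
        rw [if_neg]
        rintro ⟨j, _, hocc⟩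
        have := hocc 0 hn
        rw [hd] at this
        exact hw0 this.symm
      · obtain ⟨b, hb, hfb⟩ := hfull
        refine ⟨dExp β b, subset_closure ⟨b, hb, rfl⟩, ?_⟩
        rw [h2]
        funext i
        exact if_pos (hfb i)
      · obtain ⟨c, hc, hc1, hc2⟩ := hpart m hm
        refine ⟨dExp β c, subset_closure ⟨c, hc, rfl⟩, ?_⟩
        funext i
        show (if P (dExp β c) i then (2:ℕ) else 1) = if i < m then 1 else 2
        by_cases hi : i < m
        · rw [if_neg (hc1 i hi), if_pos hi]
        · rw [if_pos (hc2 i (le_of_not_gt hi)), if_neg hi]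
  · -- commutation
    intro x _
    funext i
    show (if P (shift x) i then 2 else 1) = (if P x (i + 1) then 2 else 1)
    apply if_congr ?_ rfl rfl
    constructor
    · rintro ⟨j, hj, hocc⟩
      refine ⟨j, hj, fun i' hi' => ?_⟩
      have := hocc i' hi'
      simp only [shift] at this
      rw [show i + 1 + j + i' = i + j + i' + 1 by omega]
      exact this
    · rintro ⟨j, hj, hocc⟩
      refine ⟨j, hj, fun i' hi' => ?_⟩
      have := hocc i' hi'
      simp only [shift]
      rw [show i + j + i' + 1 = i + 1 + j + i' by omega]
      exact this

lemma digit_one_or_two (β : ℝ) (hβ0 : 0 < β) (hβ2 : β < 2) {t : ℝ}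
    (ht : t ∈ Set.Ioc (0 : ℝ) 1) (q : ℕ) : dExp β t q = 1 ∨ dExp β t q = 2 := by
  have hu := iter_mem β ht q
  have h0 : (0 : ℤ) ≤ ⌊β * (Tneg β)^[q] t⌋ := Int.floor_nonneg.2 (by nlinarith [hu.1])
  have h2 : ⌊β * (Tneg β)^[q] t⌋ < 2 := by
    apply Int.floor_lt.2
    push_cast
    nlinarith [hu.1, hu.2]
  unfold dExp
  omega

lemma digit_one_step (β : ℝ) (hβ0 : 0 < β) {t : ℝ} (ht : t ∈ Set.Ioc (0 : ℝ) 1) (q : ℕ)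
    (h : dExp β t q = 1) : (Tneg β)^[q + 1] t = 1 - β * (Tneg β)^[q] t := by
  have hu := iter_mem β ht q
  have h0 : (0 : ℤ) ≤ ⌊β * (Tneg β)^[q] t⌋ := Int.floor_nonneg.2 (by nlinarith [hu.1])
  have hfl : ⌊β * (Tneg β)^[q] t⌋ = 0 := by unfold dExp at h; omega
  rw [Function.iterate_succ_apply']
  simp only [Tneg, hfl]
  push_cast
  ring

lemma digit_two_step (β : ℝ) (hβ0 : 0 < β) {t : ℝ} (ht : t ∈ Set.Ioc (0 : ℝ) 1) (q : ℕ)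
    (h : dExp β t q = 2) : (Tneg β)^[q + 1] t = 2 - β * (Tneg β)^[q] t := by
  have hu := iter_mem β ht q
  have h0 : (0 : ℤ) ≤ ⌊β * (Tneg β)^[q] t⌋ := Int.floor_nonneg.2 (by nlinarith [hu.1])
  have hfl : ⌊β * (Tneg β)^[q] t⌋ = 1 := by unfold dExp at h; omega
  rw [Function.iterate_succ_apply']
  simp only [Tneg, hfl]
  push_cast
  ring

lemma case_one (β : ℝ) (hβ : 1 < β) (hφ : β < (1 + Real.sqrt 5) / 2) :
    ∃ π : (ℕ → ℕ) → (ℕ → ℕ),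
      ContinuousOn π (SigmaNegBeta β) ∧
      π '' SigmaNegBeta β = Xset ∧
      ∀ x ∈ SigmaNegBeta β, π (shift x) = shift (π x) := by
  have hs5 : Real.sqrt 5 * Real.sqrt 5 = 5 := Real.mul_self_sqrt (by norm_num)
  have hs0 : (0 : ℝ) ≤ Real.sqrt 5 := Real.sqrt_nonneg 5
  have hβ2 : β * β < β + 1 := by
    nlinarith [mul_self_lt_mul_self (show (0:ℝ) ≤ 2 * β - 1 by linarith)
      (show 2 * β - 1 < Real.sqrt 5 by linarith)]
  have hb2 : β < 2 := by nlinarith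
  have hb0 : (0 : ℝ) < β := by linarith
  have h1b : (0 : ℝ) < 1 + β := by linarith
  set f : ℝ := 1 / (1 + β) with hf
  have hf01 : 0 < f ∧ f < 1 := ⟨by positivity, by rw [hf, div_lt_one h1b]; linarith⟩
  have hffix : f = 1 - β * f := by rw [hf]; field_simp; ring
  set δ : ℝ := 2 - β - f with hδdef
  have hδ : 0 < δ := by
    have : (1 + β) * δ = 1 + β - β * β := by rw [hδdef, hf]; field_simp; ring
    nlinarith
  obtain ⟨M, hM⟩ := pow_unbounded_of_one_lt (1 / δ) hβ
  have hMδ : 1 < β ^ M * δ := by rw [div_lt_iff₀ hδ] at hM; linarith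
  apply master β hβ 1 (M + 1) (fun _ => 2) one_pos (by omega) (by norm_num)
  · -- habs
    intro t ht p hocc
    have hp2 : dExp β t p = 2 := by simpa using hocc 0 one_pos
    by_contra hno
    push_neg at hno
    have hd1 : ∀ j, 1 ≤ j → j ≤ M + 1 → dExp β t (p + j) = 1 := by
      intro j hj1 hjM
      rcases digit_one_or_two β hb0 hb2 ht (p + j) with h | h
      · exact h
      · exact absurd (fun i (hi : i < 1) => by
          have : i = 0 := by omega
          subst this
          simpa using h) (hno j hj1 hjM)
    have hu0 : δ ≤ (Tneg β)^[p + 1] t - f := by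
      have := digit_two_step β hb0 ht p hp2
      have hup := iter_mem β ht p
      rw [this, hδdef]
      nlinarith [hup.2]
    have hrec : ∀ k, k ≤ M →
        (Tneg β)^[p + 1 + k] t - f = (-β) ^ k * ((Tneg β)^[p + 1] t - f) := by
      intro k hk
      induction k with
      | zero => simp
      | succ k ih =>
        have ihh := ih (by omega)
        have hdig : dExp β t (p + (1 + k)) = 1 := hd1 (1 + k) (by omega) (by omega)
        have hstep := digit_one_step β hb0 ht (p + (1 + k)) (by
          rw [show p + (1 + k) = p + (1 + k) from rfl]; exact hdig)
        have he1 : p + (1 + k) + 1 = p + 1 + (k + 1) := by omega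
        have he2 : p + (1 + k) = p + 1 + k := by omega
        rw [he1, he2] at hstep
        rw [hstep, pow_succ]
        have : 1 - β * (Tneg β)^[p + 1 + k] t - f = -β * ((Tneg β)^[p + 1 + k] t - f) := by
          rw [hf]; field_simp; ring
        rw [this, ihh]
        ring
    have hv := iter_mem β ht (p + 1 + M)
    have hvf : |(Tneg β)^[p + 1 + M] t - f| < 1 := by
      rw [abs_lt]
      constructor <;> nlinarith [hv.1, hv.2, hf01.1, hf01.2]
    have heq := hrec M le_rfl
    have habs2 : |(Tneg β)^[p + 1 + M] t - f| = β ^ M * ((Tneg β)^[p + 1] t - f) := by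
      rw [heq, abs_mul, abs_pow, abs_neg, abs_of_pos hb0,
        abs_of_nonneg (by linarith : (0:ℝ) ≤ (Tneg β)^[p + 1] t - f)]
    nlinarith [pow_pos hb0 M]
  · -- hfull
    set b : ℝ := 2 / (1 + β) with hb
    have hbm : b ∈ Set.Ioc (0 : ℝ) 1 := ⟨by positivity, by rw [hb, div_le_one h1b]; linarith⟩
    have hflr : ⌊β * b⌋ = 1 := by
      apply Int.floor_eq_iff.2
      constructor
      · push_cast
        have he : β * (2 / (1 + β)) = 2 * β / (1 + β) := by ring
        rw [hb, he, le_div_iff₀ h1b]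
        linarith
      · push_cast
        have he : β * (2 / (1 + β)) = 2 * β / (1 + β) := by ring
        rw [hb, he, div_lt_iff₀ h1b]
        linarith
    have hfx : Tneg β b = b := by
      simp only [Tneg, hflr]
      push_cast
      rw [hb]
      field_simp
      ring
    have hd : ∀ i, dExp β b i = 2 := by
      intro i
      unfold dExp
      rw [Function.iterate_fixed hfx i, hflr]
      rfl
    refine ⟨b, hbm, fun i => ⟨0, by omega, fun i' hi' => ?_⟩⟩
    have : i' = 0 := by omega
    subst this
    simpa using hd (i + 0 + 0)
  · -- hpart
    intro m hm
    set b : ℝ := 2 / (1 + β) with hb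
    have hbo : b ∈ Set.Ioo (0 : ℝ) 1 := ⟨by positivity, by rw [hb, div_lt_one h1b]; linarith⟩
    have hflr : ⌊β * b⌋ = 1 := by
      apply Int.floor_eq_iff.2
      constructor
      · push_cast
        have he : β * (2 / (1 + β)) = 2 * β / (1 + β) := by ring
        rw [hb, he, le_div_iff₀ h1b]
        linarith
      · push_cast
        have he : β * (2 / (1 + β)) = 2 * β / (1 + β) := by ring
        rw [hb, he, div_lt_iff₀ h1b]
        linarith
    have hfx : Tneg β b = b := by
      simp only [Tneg, hflr]
      push_cast
      rw [hb]
      field_simp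
      ring
    have hd : ∀ i, dExp β b i = 2 := by
      intro i
      unfold dExp
      rw [Function.iterate_fixed hfx i, hflr]
      rfl
    obtain ⟨c, hco, hpre, htail⟩ := prefix_ones β hβ (m + M) hbo
    refine ⟨c, ⟨hco.1, le_of_lt hco.2⟩, ?_, ?_⟩
    · rintro i hi ⟨j, hjW, hocc⟩
      have h0 := hocc 0 (by omega)
      simp only [Nat.add_zero] at h0
      have : dExp β c (i + j) = 1 := hpre (i + j) (by omega)
      omega
    · intro i hi
      by_cases hip : i ≤ m + M
      · refine ⟨m + M - i, by omega, fun i' hi' => ?_⟩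
        have : i' = 0 := by omega
        subst this
        have he : i + (m + M - i) + 0 = (m + M) + 0 := by omega
        rw [he, htail 0, hd 0]
      · refine ⟨0, by omega, fun i' hi' => ?_⟩
        have : i' = 0 := by omega
        subst this
        have he : i + 0 + 0 = (m + M) + (i - (m + M)) := by omega
        rw [he, htail, hd]

lemma case_two (β : ℝ) (hβ : 1 < β) (n : ℕ) (hn : 0 < n) (hodd : Odd n)
    (hper : ∀ i, dExp β 1 (i + n) = dExp β 1 i) :
    ∃ π : (ℕ → ℕ) → (ℕ → ℕ),
      ContinuousOn π (SigmaNegBeta β) ∧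
      π '' SigmaNegBeta β = Xset ∧
      ∀ x ∈ SigmaNegBeta β, π (shift x) = shift (π x) := by
  have hb0 : (0 : ℝ) < β := by linarith
  have hw2 : 2 ≤ dExp β 1 0 := by
    have h1 : (1 : ℤ) ≤ ⌊β * 1⌋ := Int.le_floor.2 (by push_cast; linarith)
    unfold dExp
    simp only [Function.iterate_zero, id_eq]
    omega
  have periter : ∀ k i, dExp β 1 (i + k * n) = dExp β 1 i := by
    intro k
    induction k with
    | zero => simp
    | succ k ih =>
      intro i
      rw [show i + (k + 1) * n = (i + k * n) + n by ring, hper (i + k * n), ih i]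
  -- facts about 1/β
  have hq : (1 / β) ∈ Set.Ioo (0 : ℝ) 1 := ⟨by positivity, by rw [div_lt_one hb0]; linarith⟩
  have hfl1 : ⌊β * (1 / β)⌋ = 1 := by
    rw [mul_one_div, div_self (by linarith : β ≠ 0)]
    exact Int.floor_one
  have hd0 : dExp β (1 / β) 0 = 2 := by
    unfold dExp
    simp only [Function.iterate_zero, id_eq]
    rw [hfl1]
    rfl
  have hT1 : Tneg β (1 / β) = 1 := by
    simp only [Tneg, hfl1]
    push_cast
    field_simp
    norm_num
  have hdtail : ∀ i, dExp β (1 / β) (i + 1) = dExp β 1 i := by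
    intro i
    have := dExp_shift β (1 / β) 1 i
    rw [Nat.add_comm i 1, ← this, Function.iterate_one, hT1]
  apply master β hβ n n (dExp β 1) hn hn (by omega)
  · -- habs
    intro t ht p hocc
    have hs : (Tneg β)^[p] t ∈ Set.Ioc (0 : ℝ) 1 := iter_mem β ht p
    have hd : ∀ i, i < n → dExp β ((Tneg β)^[p] t) i = dExp β 1 i := by
      intro i hi
      rw [dExp_shift]
      exact hocc i hi
    have hs1 : (Tneg β)^[p] t = 1 := eq_one_of_prefix β hβ n hn hodd hper hs hd
    refine ⟨n, hn, le_rfl, fun i hi => ?_⟩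
    have := dExp_shift β t p (n + i)
    rw [hs1] at this
    rw [show p + n + i = p + (n + i) by omega, ← this, Nat.add_comm n i, hper i]
  · -- hfull
    refine ⟨1, one_mem_Ioc, fun i => ?_⟩
    obtain ⟨j, k, hj, hjk⟩ := window_lemma n hn 0 i (by omega)
    refine ⟨j, hj, fun i' hi' => ?_⟩
    rw [show i + j + i' = i' + k * n by omega, periter k i']
  · -- hpart
    intro m hm
    by_cases hdeg : ∀ i, dExp β 1 i = 2
    · obtain ⟨c, hco, hpre, htail⟩ := prefix_ones β hβ (m + n - 1) hq
      have hc2all : ∀ r, m + n - 1 ≤ r → dExp β c r = 2 := by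
        intro r hr
        rcases Nat.eq_or_lt_of_le hr with he | hlt
        · rw [show r = (m + n - 1) + 0 by omega, htail 0, hd0]
        · rw [show r = (m + n - 1) + ((r - (m + n - 1) - 1) + 1) by omega, htail,
            hdtail, hdeg]
      refine ⟨c, ⟨hco.1, le_of_lt hco.2⟩, ?_, ?_⟩
      · rintro i hi ⟨j, hj, hocc⟩
        have h0 := hocc 0 hn
        rw [Nat.add_zero] at h0
        have hlt : i + j < m + n - 1 := by omega
        have := hpre (i + j) hlt
        omega
      · intro i hi
        refine ⟨n - 1, by omega, fun i' hi' => ?_⟩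
        rw [hc2all (i + (n - 1) + i') (by omega), hdeg i']
    · push_neg at hdeg
      obtain ⟨i0, hi0⟩ := hdeg
      obtain ⟨c, hco, hpre, htail⟩ := prefix_ones β hβ (m + n - 2) hq
      have hctail : ∀ i, dExp β c ((m + n - 1) + i) = dExp β 1 i := by
        intro i
        rw [show (m + n - 1) + i = (m + n - 2) + (i + 1) by omega, htail, hdtail]
      have hcmid : dExp β c (m + n - 2) = 2 := by
        rw [show m + n - 2 = (m + n - 2) + 0 by omega, htail 0, hd0]
      have hOcc : ∀ k, OccAt (dExp β 1) n (dExp β c) ((m + n - 1) + k * n) := by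
        intro k i' hi'
        rw [show (m + n - 1) + k * n + i' = (m + n - 1) + (i' + k * n) by omega,
          hctail, periter]
      have hno : ∀ q, q < m + n - 1 → ¬ OccAt (dExp β 1) n (dExp β c) q := by
        intro q hqlt hocc
        rcases Nat.lt_or_ge q (m + n - 2) with hq2 | hq2
        · have h0 := hocc 0 hn
          rw [Nat.add_zero] at h0
          have := hpre q hq2
          omega
        · have hqe : q = m + n - 2 := by omega
          subst hqe
          have h0 := hocc 0 hn
          rw [Nat.add_zero, hcmid] at h0
          have hchain : ∀ i', 1 ≤ i' → i' < n → dExp β 1 (i' - 1) = dExp β 1 i' := by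
            intro i' h1' h2'
            have := hocc i' h2'
            rw [show (m + n - 2) + i' = (m + n - 1) + (i' - 1) by omega, hctail] at this
            exact this
          have halln : ∀ i', i' < n → dExp β 1 i' = 2 := by
            intro i'
            induction i' with
            | zero => intro _; omega
            | succ i' ih =>
              intro hi'
              rw [← hchain (i' + 1) (by omega) hi']
              simpa using ih (by omega)
          have h2' : dExp β 1 i0 = 2 := by
            have hmod := periter (i0 / n) (i0 % n)
            rw [Nat.mod_add_div'] at hmod
            rw [hmod]
            exact halln (i0 % n) (Nat.mod_lt i0 hn)
          exact hi0 h2'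
      refine ⟨c, ⟨hco.1, le_of_lt hco.2⟩, ?_, ?_⟩
      · rintro i hi ⟨j, hj, hocc⟩
        exact hno (i + j) (by omega) hocc
      · intro i hi
        obtain ⟨j, k, hj, hjk⟩ := window_lemma n hn (m + n - 1) i (by omega)
        exact ⟨j, hj, hjk ▸ hOcc k⟩

/-- If `1 < β < (1+√5)/2`, or `d_{−β}(1)` is periodic with odd period, then `X` is a
factor of the (−β)-shift: there is a continuous shift-commuting surjection
`π : Σ_{−β} → X`. -/
theorem exists_non_intrinsically_ergodic_factor (β : ℝ) (hβ : 1 < β)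
    (h : β < (1 + Real.sqrt 5) / 2 ∨
      ∃ n : ℕ, 0 < n ∧ Odd n ∧ ∀ i, dExp β 1 (i + n) = dExp β 1 i) :
    ∃ π : (ℕ → ℕ) → (ℕ → ℕ),
      ContinuousOn π (SigmaNegBeta β) ∧
      π '' SigmaNegBeta β = Xset ∧
      ∀ x ∈ SigmaNegBeta β, π (shift x) = shift (π x) := by
  rcases h with hφ | ⟨n, hn, hodd, hper⟩
  · exact case_one β hβ hφ
  · exact case_two β hβ n hn hodd hper
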